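/- Let N ≤ N_R be positive integers, a ∈ ℝ, and let p(t, a) = Σ_{n=0}^∞ A_n(a) Σ_{m=0}^n binom(n,m) (−1)^m t^{N+n−m−1} e^{−t}/(N+n−m−1)! for t > 0. Then for every real s < 1, the function t ↦ e^{s t} p(t, a) is integrable on (0, ∞) and ∫_0^∞ e^{s t} p(t, a) dt = (1 − s)^{−N} · ₁F₁(N; N_R; a s/(1 − s)). -/

import Mathlib

/-- Pochhammer symbol `(x)ₙ = x (x+1) ⋯ (x+n-1)`. -/
noncomputable def poch (x : ℝ) (n : ℕ) : ℝ := ∏ i ∈ Finset.range n, (x + i)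

/-- The confluent hypergeometric function `₁F₁(b; c; σ)` defined by its series. -/
noncomputable def oneFone (b c : ℕ) (σ : ℝ) : ℝ :=
  ∑' n : ℕ, (poch b n / poch c n) * σ ^ n / (n.factorial : ℝ)

/-- `A_n(a) = ((N)_n/(N_R)_n) aⁿ/n!`. -/
noncomputable def Acoef (N NR : ℕ) (a : ℝ) (n : ℕ) : ℝ :=
  (poch N n / poch NR n) * a ^ n / (n.factorial : ℝ)

/-- The (normalized) ZF SNR density
`p(t,a) = Σ_n A_n(a) Σ_{m=0}^n C(n,m) (−1)^m t^{N+n−m−1} e^{−t}/(N+n−m−1)!`. -/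
noncomputable def pdfZF (N NR : ℕ) (t a : ℝ) : ℝ :=
  ∑' n : ℕ, Acoef N NR a n *
    ∑ m ∈ Finset.range (n + 1),
      (n.choose m : ℝ) * (-1 : ℝ) ^ m * t ^ (N + n - m - 1) * Real.exp (-t)
        / ((N + n - m - 1).factorial : ℝ)

open MeasureTheory Set Filter Topology

section Helpers

lemma tendsto_pow_mul_exp_neg_mul' (k : ℕ) {d : ℝ} (hd : 0 < d) :
    Tendsto (fun x : ℝ => x ^ k * Real.exp (-(d * x))) atTop (𝓝 0) := by
  have h := (Real.tendsto_pow_mul_exp_neg_atTop_nhds_zero k).comp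
    (tendsto_id.const_mul_atTop hd)
  have heq : (fun x : ℝ => x ^ k * Real.exp (-(d * x)))
      = fun x => (1 / d ^ k) * ((d * x) ^ k * Real.exp (-(d * x))) := by
    funext x; field_simp; ring
  rw [heq]
  simpa using h.const_mul (1 / d ^ k)

lemma momIntegrable {c : ℝ} (hc : 0 < c) (k : ℕ) :
    MeasureTheory.IntegrableOn (fun t : ℝ => t ^ k * Real.exp (-(c * t))) (Set.Ioi 0) := by
  refine integrable_of_isBigO_exp_neg (half_pos hc) ?_ ?_
  · exact ((continuous_pow k).mul (Real.continuous_exp.comp (by fun_prop))).continuousOn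
  · refine Asymptotics.IsLittleO.isBigO ?_
    refine Asymptotics.isLittleO_of_tendsto (fun x hx => absurd hx (Real.exp_ne_zero _)) ?_
    have heq : (fun x : ℝ => (x ^ k * Real.exp (-(c * x))) / Real.exp (-(c / 2) * x))
        = fun x => x ^ k * Real.exp (-(c / 2 * x)) := by
      funext x
      have h1 : Real.exp (-(c * x)) = Real.exp (-(c / 2 * x)) * Real.exp (-(c / 2) * x) := by
        rw [← Real.exp_add]; congr 1; ring
      rw [h1, ← mul_assoc, mul_div_cancel_right₀ _ (Real.exp_ne_zero _)]
    rw [heq]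
    exact tendsto_pow_mul_exp_neg_mul' k (half_pos hc)

lemma momVal {c : ℝ} (hc : 0 < c) (k : ℕ) :
    ∫ t in Set.Ioi (0 : ℝ), t ^ k * Real.exp (-(c * t))
      = (k.factorial : ℝ) / c ^ (k + 1) := by
  have h := Real.integral_rpow_mul_exp_neg_mul_Ioi (a := (k : ℝ) + 1)
    (by positivity) hc
  have hL : ∀ t : ℝ, t ^ ((k : ℝ) + 1 - 1) = t ^ k := fun t => by
    rw [show ((k : ℝ) + 1 - 1) = ((k : ℕ) : ℝ) by ring, Real.rpow_natCast]
  simp_rw [hL] at h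
  rw [h, Real.Gamma_nat_eq_factorial,
    show ((k : ℝ) + 1) = ((k + 1 : ℕ) : ℝ) by push_cast; ring,
    Real.rpow_natCast, one_div, inv_pow, inv_mul_eq_div]

lemma binomSum {c : ℝ} (hc : c ≠ 0) {N : ℕ} (hN : 0 < N) (n : ℕ) (x : ℝ) :
    ∑ m ∈ Finset.range (n + 1),
      ((n.choose m : ℝ) * x ^ m / ((N + n - m - 1).factorial : ℝ))
        * (((N + n - m - 1).factorial : ℝ) / c ^ (N + n - m - 1 + 1))
      = (1 + x * c) ^ n / c ^ (N + n) := by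
  have step : ∀ m ∈ Finset.range (n + 1),
      ((n.choose m : ℝ) * x ^ m / ((N + n - m - 1).factorial : ℝ))
        * (((N + n - m - 1).factorial : ℝ) / c ^ (N + n - m - 1 + 1))
      = (x * c) ^ m * 1 ^ (n - m) * (n.choose m : ℝ) / c ^ (N + n) := by
    intro m hm
    have hm' : m ≤ n := Finset.mem_range_succ_iff.mp hm
    have hk : ((N + n - m - 1).factorial : ℝ) ≠ 0 :=
      Nat.cast_ne_zero.mpr (Nat.factorial_ne_zero _)
    have hpow : c ^ (N + n - m - 1 + 1) * c ^ m = c ^ (N + n) := by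
      rw [← pow_add]; congr 1; omega
    rw [one_pow, mul_pow, ← hpow]
    field_simp
  rw [Finset.sum_congr rfl step, ← Finset.sum_div, ← add_pow, add_comm]

lemma termId {c : ℝ} (hc : c ≠ 0) (R aa ss : ℝ) (N n : ℕ) :
    (R * aa ^ n / (n.factorial : ℝ)) * (ss ^ n / c ^ (N + n))
      = (c ^ N)⁻¹ * (R * (aa * ss / c) ^ n / (n.factorial : ℝ)) := by
  have hn : (n.factorial : ℝ) ≠ 0 := Nat.cast_ne_zero.mpr (Nat.factorial_ne_zero _)
  rw [div_pow, mul_pow, pow_add]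
  field_simp

lemma intSum {c : ℝ} (hc : 0 < c) {N : ℕ} (hN : 0 < N) (n : ℕ) (x A : ℝ) :
    (MeasureTheory.Integrable (fun t => A * ∑ m ∈ Finset.range (n + 1),
        ((n.choose m : ℝ) * x ^ m / ((N + n - m - 1).factorial : ℝ))
          * (t ^ (N + n - m - 1) * Real.exp (-(c * t))))
      (MeasureTheory.volume.restrict (Set.Ioi 0))) ∧
    (∫ t in Set.Ioi (0 : ℝ), A * ∑ m ∈ Finset.range (n + 1),
        ((n.choose m : ℝ) * x ^ m / ((N + n - m - 1).factorial : ℝ))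
          * (t ^ (N + n - m - 1) * Real.exp (-(c * t))))
      = A * ((1 + x * c) ^ n / c ^ (N + n)) := by
  have hint : ∀ m ∈ Finset.range (n + 1), MeasureTheory.Integrable
      (fun t => ((n.choose m : ℝ) * x ^ m / ((N + n - m - 1).factorial : ℝ))
        * (t ^ (N + n - m - 1) * Real.exp (-(c * t))))
      (MeasureTheory.volume.restrict (Set.Ioi 0)) :=
    fun m _ => (momIntegrable hc _).const_mul _
  constructor
  · exact (integrable_finset_sum _ hint).const_mul _
  · rw [MeasureTheory.integral_const_mul, MeasureTheory.integral_finset_sum _ hint]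
    congr 1
    calc ∑ m ∈ Finset.range (n + 1), ∫ t in Set.Ioi (0 : ℝ),
          ((n.choose m : ℝ) * x ^ m / ((N + n - m - 1).factorial : ℝ))
            * (t ^ (N + n - m - 1) * Real.exp (-(c * t)))
        = ∑ m ∈ Finset.range (n + 1),
          ((n.choose m : ℝ) * x ^ m / ((N + n - m - 1).factorial : ℝ))
            * (((N + n - m - 1).factorial : ℝ) / c ^ (N + n - m - 1 + 1)) := by
          refine Finset.sum_congr rfl fun m _ => ?_
          rw [MeasureTheory.integral_const_mul, momVal hc]
      _ = (1 + x * c) ^ n / c ^ (N + n) := binomSum hc.ne' hN n x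

lemma pochFacts {N NR : ℕ} (hN : 0 < N) (hNNR : N ≤ NR) (n : ℕ) :
    0 ≤ poch N n / poch NR n ∧ poch N n / poch NR n ≤ 1 := by
  have hNpos : (0 : ℝ) < N := by exact_mod_cast hN
  have h1 : 0 < poch N n := Finset.prod_pos fun i _ => by positivity
  have h2 : poch N n ≤ poch NR n := by
    refine Finset.prod_le_prod (fun i _ => by positivity) (fun i _ => ?_)
    have : (N : ℝ) ≤ NR := by exact_mod_cast hNNR
    linarith
  have h3 : 0 < poch NR n := lt_of_lt_of_le h1 h2
  exact ⟨le_of_lt (div_pos h1 h3), (div_le_one h3).mpr h2⟩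

lemma myIntegrableTsum {α : Type*} [MeasurableSpace α] {μ : MeasureTheory.Measure α}
    {F : ℕ → α → ℝ} (hF : ∀ n, MeasureTheory.Integrable (F n) μ)
    (hsum : Summable fun n => ∫ t, ‖F n t‖ ∂μ) :
    MeasureTheory.Integrable (fun t => ∑' n, F n t) μ := by
  have h1 : ∀ n, AEMeasurable (fun t => (‖F n t‖₊ : ENNReal)) μ :=
    fun n => (hF n).aestronglyMeasurable.aemeasurable.nnnorm.coe_nnreal_ennreal
  have heq : ∀ n, ∫⁻ t, (‖F n t‖₊ : ENNReal) ∂μ = ENNReal.ofReal (∫ t, ‖F n t‖ ∂μ) :=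
    fun n => (MeasureTheory.ofReal_integral_norm_eq_lintegral_enorm (hF n)).symm
  have hne : ∑' n, ∫⁻ t, (‖F n t‖₊ : ENNReal) ∂μ ≠ ⊤ := by
    simp_rw [heq]
    rw [← ENNReal.ofReal_tsum_of_nonneg
      (fun n => integral_nonneg fun t => norm_nonneg _) hsum]
    exact ENNReal.ofReal_ne_top
  have hlint : ∫⁻ t, ∑' n, (‖F n t‖₊ : ENNReal) ∂μ ≠ ⊤ := by
    rw [MeasureTheory.lintegral_tsum h1]; exact hne
  have hae : ∀ᵐ t ∂μ, Summable fun n => ‖F n t‖ := by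
    filter_upwards [MeasureTheory.ae_lt_top' (AEMeasurable.ennreal_tsum h1) hlint] with t ht
    have h2 := ENNReal.tsum_coe_ne_top_iff_summable_coe.mp ht.ne
    simpa [coe_nnnorm] using h2
  have hmeas : MeasureTheory.AEStronglyMeasurable (fun t => ∑' n, F n t) μ := by
    refine aestronglyMeasurable_of_tendsto_ae atTop
      (f := fun N t => ∑ n ∈ Finset.range N, F n t)
      (fun N => Finset.aestronglyMeasurable_fun_sum _ fun n _ => (hF n).1) ?_
    filter_upwards [hae] with t ht
    exact ht.of_norm.hasSum.tendsto_sum_nat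
  refine ⟨hmeas, ?_⟩
  show ∫⁻ t, (‖∑' n, F n t‖₊ : ENNReal) ∂μ < ⊤
  have hmono : ∫⁻ t, (‖∑' n, F n t‖₊ : ENNReal) ∂μ
      ≤ ∫⁻ t, ∑' n, (‖F n t‖₊ : ENNReal) ∂μ := by
    refine MeasureTheory.lintegral_mono_ae ?_
    filter_upwards [hae] with t ht
    have hsn : Summable fun n => ‖F n t‖₊ := by
      rw [← NNReal.summable_coe]; simpa [coe_nnnorm] using ht
    calc (‖∑' n, F n t‖₊ : ENNReal)
        ≤ ((∑' n, ‖F n t‖₊ : NNReal) : ENNReal) := by exact_mod_cast nnnorm_tsum_le hsn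
      _ = ∑' n, (‖F n t‖₊ : ENNReal) := ENNReal.coe_tsum hsn
  exact lt_of_le_of_lt hmono hlint.lt_top

end Helpers

/-- For positive integers `N ≤ N_R`, `a ∈ ℝ`, and real `s < 1`, the function
`t ↦ e^{st} p(t,a)` is integrable on `(0,∞)` and
`∫_0^∞ e^{st} p(t,a) dt = (1−s)^{−N} ₁F₁(N; N_R; as/(1−s))`. -/
theorem stmt8 (N NR : ℕ) (hN : 0 < N) (hNNR : N ≤ NR) (a s : ℝ) (hs : s < 1) :
    MeasureTheory.IntegrableOn (fun t => Real.exp (s * t) * pdfZF N NR t a)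
      (Set.Ioi 0) ∧
    ∫ t in Set.Ioi (0 : ℝ), Real.exp (s * t) * pdfZF N NR t a =
      (1 - s) ^ (-(N : ℤ)) * oneFone N NR (a * s / (1 - s)) := by
  set c : ℝ := 1 - s with hcdef
  have hc : 0 < c := by rw [hcdef]; linarith
  set F : ℕ → ℝ → ℝ := fun n t => Acoef N NR a n * ∑ m ∈ Finset.range (n + 1),
      ((n.choose m : ℝ) * (-1 : ℝ) ^ m / ((N + n - m - 1).factorial : ℝ))
        * (t ^ (N + n - m - 1) * Real.exp (-(c * t))) with hFdef
  -- pointwise identity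
  have hexp : ∀ u : ℝ, Real.exp (s * u) * Real.exp (-u) = Real.exp (-(c * u)) := by
    intro u; rw [← Real.exp_add]; congr 1; rw [hcdef]; ring
  have hfun : (fun t => Real.exp (s * t) * pdfZF N NR t a) = fun t => ∑' n, F n t := by
    funext t
    rw [pdfZF, ← tsum_mul_left]
    refine tsum_congr fun n => ?_
    rw [hFdef]
    simp only [Finset.mul_sum]
    refine Finset.sum_congr rfl fun m hm => ?_
    rw [← hexp t]
    ring
  -- integrability of each term
  have hFint : ∀ n, MeasureTheory.Integrable (F n)
      (MeasureTheory.volume.restrict (Set.Ioi 0)) := by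
    intro n
    rw [hFdef]
    exact (intSum hc hN n (-1) (Acoef N NR a n)).1
  -- value of each integral
  have hs' : (1 : ℝ) + (-1) * c = s := by rw [hcdef]; ring
  have hFval : ∀ n, ∫ t in Set.Ioi (0 : ℝ), F n t
      = Acoef N NR a n * (s ^ n / c ^ (N + n)) := by
    intro n
    rw [hFdef]
    rw [(intSum hc hN n (-1) (Acoef N NR a n)).2, hs']
  -- norm bound for each term
  have hFnorm : ∀ n, ∫ t in Set.Ioi (0 : ℝ), ‖F n t‖
      ≤ |Acoef N NR a n| * ((1 + 1 * c) ^ n / c ^ (N + n)) := by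
    intro n
    have hle : ∀ᵐ t ∂(MeasureTheory.volume.restrict (Set.Ioi 0)),
        ‖F n t‖ ≤ |Acoef N NR a n| * ∑ m ∈ Finset.range (n + 1),
          ((n.choose m : ℝ) * (1 : ℝ) ^ m / ((N + n - m - 1).factorial : ℝ))
            * (t ^ (N + n - m - 1) * Real.exp (-(c * t))) := by
      filter_upwards [MeasureTheory.ae_restrict_mem measurableSet_Ioi] with t ht
      rw [hFdef]
      simp only [Real.norm_eq_abs, abs_mul]
      refine mul_le_mul_of_nonneg_left ?_ (abs_nonneg _)
      refine (Finset.abs_sum_le_sum_abs _ _).trans ?_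
      refine Finset.sum_le_sum fun m hm => ?_
      have htpos : (0 : ℝ) < t := ht
      have hφ : 0 ≤ t ^ (N + n - m - 1) * Real.exp (-(c * t)) := by positivity
      rw [abs_mul, abs_of_nonneg hφ]
      refine mul_le_mul_of_nonneg_right (le_of_eq ?_) hφ
      rw [abs_div, abs_mul, abs_pow, abs_neg, abs_one, one_pow, Nat.abs_cast,
        Nat.abs_cast]
    calc ∫ t in Set.Ioi (0 : ℝ), ‖F n t‖
        ≤ ∫ t in Set.Ioi (0 : ℝ), |Acoef N NR a n| * ∑ m ∈ Finset.range (n + 1),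
            ((n.choose m : ℝ) * (1 : ℝ) ^ m / ((N + n - m - 1).factorial : ℝ))
              * (t ^ (N + n - m - 1) * Real.exp (-(c * t))) :=
          MeasureTheory.integral_mono_ae (hFint n).norm
            (intSum hc hN n 1 |Acoef N NR a n|).1 hle
      _ = |Acoef N NR a n| * ((1 + 1 * c) ^ n / c ^ (N + n)) :=
          (intSum hc hN n 1 |Acoef N NR a n|).2
  -- summability of the integrals of the norms
  have hD : Summable fun n : ℕ =>
      ((|a| * (1 + 1 * c) / c) ^ n / (n.factorial : ℝ)) * (1 / c ^ N) :=
    (Real.summable_pow_div_factorial _).mul_right _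
  have hbnd : ∀ n : ℕ, |Acoef N NR a n| * ((1 + 1 * c) ^ n / c ^ (N + n))
      ≤ ((|a| * (1 + 1 * c) / c) ^ n / (n.factorial : ℝ)) * (1 / c ^ N) := by
    intro n
    obtain ⟨hR0, hR1⟩ := pochFacts hN hNNR n
    have hA : |Acoef N NR a n| ≤ |a| ^ n / (n.factorial : ℝ) := by
      rw [Acoef, abs_div, abs_mul, abs_pow, abs_of_nonneg hR0, Nat.abs_cast]
      have hfac : (0 : ℝ) < (n.factorial : ℝ) := by positivity
      calc poch ↑N n / poch ↑NR n * |a| ^ n / ↑n.factorial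
          ≤ 1 * |a| ^ n / ↑n.factorial := by gcongr
        _ = |a| ^ n / ↑n.factorial := by rw [one_mul]
    have heq2 : (|a| ^ n / (n.factorial : ℝ)) * ((1 + 1 * c) ^ n / c ^ (N + n))
        = ((|a| * (1 + 1 * c) / c) ^ n / (n.factorial : ℝ)) * (1 / c ^ N) := by
      rw [div_pow, mul_pow, pow_add]
      ring
    calc |Acoef N NR a n| * ((1 + 1 * c) ^ n / c ^ (N + n))
        ≤ (|a| ^ n / (n.factorial : ℝ)) * ((1 + 1 * c) ^ n / c ^ (N + n)) := by
          have h1c : (0 : ℝ) ≤ (1 + 1 * c) ^ n / c ^ (N + n) := by positivity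
          exact mul_le_mul_of_nonneg_right hA h1c
      _ = _ := heq2
  have hSum : Summable fun n => ∫ t in Set.Ioi (0 : ℝ), ‖F n t‖ := by
    refine Summable.of_nonneg_of_le
      (fun n => integral_nonneg fun t => norm_nonneg _)
      (fun n => (hFnorm n).trans (hbnd n)) hD
  constructor
  · rw [hfun]
    exact myIntegrableTsum hFint hSum
  · rw [hfun, ← MeasureTheory.integral_tsum_of_summable_integral_norm hFint hSum,
      zpow_neg, zpow_natCast, oneFone, ← tsum_mul_left]
    refine tsum_congr fun n => ?_
    rw [hFval n, Acoef]
    exact termId hc.ne' _ a s N n
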